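/- Assume the Schrödinger-operator setup stated in the context. There exist constants c₁, c₂ > 0, depending only on M, m, 𝐞 and C (in particular independent of x₀, L, 𝓔₁, 𝓔₂), such that for every x₀ ≥ 2 there is L₀ with the following property: for all integers L ≥ L₀, every λ ≤ 0, and every eigenfunction ψ of the Dirichlet Schrödinger operator −d²/dx² + Ṽ on (x₀, ∞) with eigenvalue λ, one has ( ∫_{x₀ < x < c₁·L²} (|ψ(x)|² + |ψ'(x)|²) dx )^{1/2} ≤ e^{−c₂·L}·( ∫_{x₀}^{∞} |ψ(x)|² dx )^{1/2}. -/

import Mathlib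

open MeasureTheory Filter Set

/-- FTC-based monotonicity. -/
lemma ftc_mono (f f' : ℝ → ℝ) {x y : ℝ} (hxy : x ≤ y)
    (hd : ∀ t ∈ Set.Icc x y, HasDerivAt f (f' t) t)
    (hc : ContinuousOn f' (Set.Icc x y))
    (h0 : ∀ t ∈ Set.Icc x y, 0 ≤ f' t) : f x ≤ f y := by
  have hftc := intervalIntegral.integral_eq_sub_of_hasDerivAt
    (f := f) (f' := f') (a := x) (b := y)
    (fun t ht => hd t (by rwa [Set.uIcc_of_le hxy] at ht))
    ((hc.mono (by rw [Set.uIcc_of_le hxy])).intervalIntegrable)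
  have hnn : 0 ≤ ∫ t in x..y, f' t :=
    intervalIntegral.integral_nonneg hxy (fun u hu => h0 u hu)
  linarith [hftc ▸ hnn]

/-- FTC-based upper bound by constant slope. -/
lemma ftc_ub (f f' : ℝ → ℝ) {x y c : ℝ} (hxy : x ≤ y)
    (hd : ∀ t ∈ Set.Icc x y, HasDerivAt f (f' t) t)
    (hc : ContinuousOn f' (Set.Icc x y))
    (h0 : ∀ t ∈ Set.Icc x y, f' t ≤ c) : f y - f x ≤ c * (y - x) := by
  have hftc := intervalIntegral.integral_eq_sub_of_hasDerivAt
    (f := f) (f' := f') (a := x) (b := y)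
    (fun t ht => hd t (by rwa [Set.uIcc_of_le hxy] at ht))
    ((hc.mono (by rw [Set.uIcc_of_le hxy])).intervalIntegrable)
  have hmono : (∫ t in x..y, f' t) ≤ ∫ t in x..y, c := by
    apply intervalIntegral.integral_mono_on hxy
      ((hc.mono (by rw [Set.uIcc_of_le hxy])).intervalIntegrable)
      intervalIntegrable_const h0
  rw [intervalIntegral.integral_const, smul_eq_mul] at hmono
  have := hftc ▸ hmono
  linarith [this]

/-- FTC-based lower bound by constant slope. -/
lemma ftc_lb (f f' : ℝ → ℝ) {x y c : ℝ} (hxy : x ≤ y)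
    (hd : ∀ t ∈ Set.Icc x y, HasDerivAt f (f' t) t)
    (hc : ContinuousOn f' (Set.Icc x y))
    (h0 : ∀ t ∈ Set.Icc x y, c ≤ f' t) : c * (y - x) ≤ f y - f x := by
  have hftc := intervalIntegral.integral_eq_sub_of_hasDerivAt
    (f := f) (f' := f') (a := x) (b := y)
    (fun t ht => hd t (by rwa [Set.uIcc_of_le hxy] at ht))
    ((hc.mono (by rw [Set.uIcc_of_le hxy])).intervalIntegrable)
  have hmono : (∫ t in x..y, c) ≤ ∫ t in x..y, f' t := by
    apply intervalIntegral.integral_mono_on hxy intervalIntegrable_const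
      ((hc.mono (by rw [Set.uIcc_of_le hxy])).intervalIntegrable) h0
  rw [intervalIntegral.integral_const, smul_eq_mul] at hmono
  have := hftc ▸ hmono
  linarith [this]

/-- Exponential growth comparison for `w'' ≥ k² w`, `w ≥ 0`, `w'(x) ≥ 0`. -/
lemma expGrow {w w1 w2 : ℝ → ℝ} {k x y : ℝ} (hk : 0 < k) (hxy : x ≤ y)
    (hd1 : ∀ t ∈ Set.Icc x y, HasDerivAt w (w1 t) t)
    (hd2 : ∀ t ∈ Set.Icc x y, HasDerivAt w1 (w2 t) t)
    (hc0 : ContinuousOn w (Set.Icc x y))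
    (hc1 : ContinuousOn w1 (Set.Icc x y))
    (hc2 : ContinuousOn w2 (Set.Icc x y))
    (hw : ∀ t ∈ Set.Icc x y, 0 ≤ w t)
    (hineq : ∀ t ∈ Set.Icc x y, k ^ 2 * w t ≤ w2 t)
    (hw1 : 0 ≤ w1 x) :
    w x ≤ 2 * Real.exp (-(k * (y - x))) * w y := by
  -- step 1 : F t = exp(-(k t)) (w1 t + k w t) is monotone
  set F : ℝ → ℝ := fun t => Real.exp (-(k * t)) * (w1 t + k * w t) with hF
  have hFd : ∀ t ∈ Set.Icc x y,
      HasDerivAt F (Real.exp (-(k * t)) * (w2 t - k ^ 2 * w t)) t := by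
    intro t ht
    have he : HasDerivAt (fun t => Real.exp (-(k * t))) (Real.exp (-(k * t)) * (-k)) t := by
      have : HasDerivAt (fun t : ℝ => -(k * t)) (-k) t := by
        simpa using ((hasDerivAt_id t).const_mul k).fun_neg
      exact (Real.hasDerivAt_exp _).comp t this
    have hsum : HasDerivAt (fun t => w1 t + k * w t) (w2 t + k * w1 t) t :=
      (hd2 t ht).add ((hd1 t ht).const_mul k)
    have this : HasDerivAt (fun t => Real.exp (-(k * t)) * (w1 t + k * w t)) _ t := he.mul hsum
    convert this using 1
    ring
  have hFc : ContinuousOn (fun t => Real.exp (-(k * t)) * (w2 t - k ^ 2 * w t))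
      (Set.Icc x y) := by
    apply ContinuousOn.mul
    · exact (Real.continuous_exp.comp (continuous_const.mul continuous_id).neg).continuousOn
    · exact hc2.sub (continuousOn_const.mul hc0)
  have hstep1 : ∀ t ∈ Set.Icc x y, k * w x * Real.exp (k * (t - x)) ≤ w1 t + k * w t := by
    intro t ht
    have hmono : F x ≤ F t := by
      apply ftc_mono F (fun t => Real.exp (-(k * t)) * (w2 t - k ^ 2 * w t)) ht.1
      · intro u hu
        exact hFd u ⟨hu.1, le_trans hu.2 ht.2⟩
      · exact hFc.mono (Set.Icc_subset_Icc le_rfl ht.2)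
      · intro u hu
        have := hineq u ⟨hu.1, le_trans hu.2 ht.2⟩
        have he := Real.exp_nonneg (-(k * u))
        nlinarith
    have hFx : Real.exp (-(k * x)) * (k * w x) ≤ F x := by
      simp only [hF]
      have := Real.exp_pos (-(k * x))
      nlinarith
    have : Real.exp (-(k * x)) * (k * w x) ≤ Real.exp (-(k * t)) * (w1 t + k * w t) :=
      le_trans hFx hmono
    have hept := Real.exp_pos (-(k * t))
    have h2 : k * w x * Real.exp (-(k * x)) ≤ (w1 t + k * w t) * Real.exp (-(k * t)) := by
      nlinarith [this]
    rw [show Real.exp (k * (t - x)) = Real.exp (-(k * x)) / Real.exp (-(k * t)) by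
      rw [← Real.exp_sub]; ring_nf, ← mul_div_assoc, div_le_iff₀ hept]
    exact h2
  -- step 2 : G mono
  set c0 : ℝ := w x * Real.exp (-(k * x)) / 2 with hc0def
  set G : ℝ → ℝ := fun t => Real.exp (k * t) * w t - c0 * Real.exp (2 * k * t) with hG
  have hGd : ∀ t ∈ Set.Icc x y, HasDerivAt G
      (Real.exp (k * t) * (w1 t + k * w t) - c0 * (2 * k) * Real.exp (2 * k * t)) t := by
    intro t ht
    have he1 : HasDerivAt (fun t : ℝ => Real.exp (k * t)) (Real.exp (k * t) * k) t :=
      (Real.hasDerivAt_exp _).comp t (by simpa using (hasDerivAt_id t).const_mul k)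
    have he2 : HasDerivAt (fun t : ℝ => Real.exp (2 * k * t))
        (Real.exp (2 * k * t) * (2 * k)) t :=
      (Real.hasDerivAt_exp _).comp t (by simpa using (hasDerivAt_id t).const_mul (2 * k))
    have this : HasDerivAt (fun t => Real.exp (k * t) * w t - c0 * Real.exp (2 * k * t)) _ t :=
      (he1.mul (hd1 t ht)).sub (he2.const_mul c0)
    convert this using 1
    ring
  have hGmono : G x ≤ G y := by
    apply ftc_mono G
      (fun t => Real.exp (k * t) * (w1 t + k * w t) - c0 * (2 * k) * Real.exp (2 * k * t))
      hxy hGd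
    · apply ContinuousOn.sub
      · exact ((Real.continuous_exp.comp (continuous_const.mul continuous_id)).continuousOn).mul
          (hc1.add (continuousOn_const.mul hc0))
      · exact continuousOn_const.mul
          ((Real.continuous_exp.comp ((continuous_const.mul continuous_id))).continuousOn)
    · intro t ht
      have h1 := hstep1 t ht
      have hkey : Real.exp (k * t) * (k * w x * Real.exp (k * (t - x)))
          = c0 * (2 * k) * Real.exp (2 * k * t) := by
        rw [hc0def]
        rw [show Real.exp (k * t) * (k * w x * Real.exp (k * (t - x)))
            = k * w x * (Real.exp (k * t) * Real.exp (k * (t - x))) by ring,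
          ← Real.exp_add,
          show w x * Real.exp (-(k * x)) / 2 * (2 * k) * Real.exp (2 * k * t)
            = k * w x * (Real.exp (-(k * x)) * Real.exp (2 * k * t)) by ring,
          ← Real.exp_add]
        ring_nf
      have hexp := Real.exp_pos (k * t)
      nlinarith [mul_le_mul_of_nonneg_left h1 (le_of_lt hexp)]
  -- conclude
  have hA := Real.exp_pos (k * x)
  have hB := Real.exp_pos (k * y)
  have hGx : G x = w x / 2 * Real.exp (k * x) := by
    rw [hG]
    simp only []
    rw [hc0def, show (2 : ℝ) * k * x = k * x + k * x by ring, Real.exp_add,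
      Real.exp_neg]
    field_simp
    ring
  have hGy : G y = Real.exp (k * y) * w y
      - w x * Real.exp (-(k * x)) / 2 * (Real.exp (k * y) * Real.exp (k * y)) := by
    rw [hG]
    simp only [hc0def]
    rw [show (2 : ℝ) * k * y = k * y + k * y by ring, Real.exp_add]
  have hwx : 0 ≤ w x := hw x ⟨le_rfl, hxy⟩
  have hwy : 0 ≤ w y := hw y ⟨hxy, le_rfl⟩
  have hfinal : w x * (Real.exp (k * y) * Real.exp (k * y)) * Real.exp (-(k * x)) / 2
      ≤ Real.exp (k * y) * w y := by
    rw [hGx, hGy] at hGmono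
    nlinarith [Real.exp_pos (k*x), hwx, Real.exp_pos (-(k*x))]
  have hrew : Real.exp (-(k * (y - x))) = Real.exp (k * x) / Real.exp (k * y) := by
    rw [← Real.exp_sub]; ring_nf
  rw [hrew]
  have hne : Real.exp (-(k * x)) = (Real.exp (k * x))⁻¹ := Real.exp_neg _
  rw [hne] at hfinal
  have e1 : 2 * Real.exp (k * x) *
      (w x * (Real.exp (k * y) * Real.exp (k * y)) * (Real.exp (k * x))⁻¹ / 2)
      = w x * Real.exp (k * y) * Real.exp (k * y) := by
    field_simp
  have h4 := mul_le_mul_of_nonneg_left hfinal (le_of_lt (mul_pos two_pos hA))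
  rw [e1] at h4
  have h5 : (w x * Real.exp (k * y)) * Real.exp (k * y)
      ≤ (2 * Real.exp (k * x) * w y) * Real.exp (k * y) := by nlinarith [h4]
  have h3 : w x * Real.exp (k * y) ≤ 2 * Real.exp (k * x) * w y :=
    le_of_mul_le_mul_right h5 hB
  rw [show 2 * (Real.exp (k * x) / Real.exp (k * y)) * w y
      = (2 * Real.exp (k * x) * w y) / Real.exp (k * y) by ring, le_div_iff₀ hB]
  linarith [h3]


/-- The reference hydrogen-like potential with error terms `𝓔₁ = E1`, `𝓔₂ = E2`. -/
noncomputable def Vtil (M m E : ℝ) (L : ℕ) (E1 E2 : ℝ → ℝ) (x : ℝ) : ℝ :=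
  -(2 * M * m ^ 2) / x + (((L : ℝ) * ((L : ℝ) + 1) + E ^ 2 * m ^ 2) / x ^ 2) * (1 + E2 x)
    + E1 x

/-- `ψ` is an eigenfunction of the Dirichlet Schrödinger operator `−d²/dx² + W`
on `(x₀, ∞)` with eigenvalue `lam`: nonzero, `C²`, square-integrable together with its
first two derivatives, vanishing at `x₀⁺`, and solving `−ψ'' + W·ψ = lam·ψ`. -/
def IsEigenfunction (W : ℝ → ℝ) (x₀ lam : ℝ) (ψ : ℝ → ℝ) : Prop :=
  (∃ x ∈ Set.Ioi x₀, ψ x ≠ 0) ∧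
  ContDiffOn ℝ 2 ψ (Set.Ioi x₀) ∧
  (∫⁻ x in Set.Ioi x₀, ENNReal.ofReal (ψ x ^ 2)) < ⊤ ∧
  (∫⁻ x in Set.Ioi x₀, ENNReal.ofReal (deriv ψ x ^ 2)) < ⊤ ∧
  (∫⁻ x in Set.Ioi x₀, ENNReal.ofReal (deriv (deriv ψ) x ^ 2)) < ⊤ ∧
  Filter.Tendsto ψ (nhdsWithin x₀ (Set.Ioi x₀)) (nhds 0) ∧
  ∀ x ∈ Set.Ioi x₀, -deriv (deriv ψ) x + W x * ψ x = lam * ψ x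

set_option maxHeartbeats 1000000 in
lemma core {x₀ a q lam : ℝ} {ψ Vt : ℝ → ℝ}
    (hx₀ : 2 ≤ x₀) (hx₀a : x₀ < a) (ha1 : 1 ≤ a) (hq : 0 < q)
    (hreg : ContDiffOn ℝ 2 ψ (Set.Ioi x₀))
    (hlim : Filter.Tendsto ψ (nhdsWithin x₀ (Set.Ioi x₀)) (nhds 0))
    (hodeQ : ∀ x, x₀ < x → deriv (deriv ψ) x = (Vt x - lam) * ψ x)
    (hQ : ∀ x, x₀ < x → x ≤ 2 * a → q ^ 2 ≤ Vt x - lam)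
    (h12 : Real.exp (-(q * a / 8)) ≤ 1 / 12) :
    (∫⁻ x in Set.Ioo x₀ a, ENNReal.ofReal (ψ x ^ 2 + deriv ψ x ^ 2))
      ≤ ENNReal.ofReal (Real.exp (-(q * a / 8)) * (ψ ((3/2) * a) ^ 2 * (a / 2)))
    ∧ ENNReal.ofReal (ψ ((3/2) * a) ^ 2 * (a / 2))
      ≤ ∫⁻ x in Set.Ioi x₀, ENNReal.ofReal (ψ x ^ 2) := by
  have hapos : (0:ℝ) < a := by linarith
  set b : ℝ := 2 * a with hbdef
  set a1 : ℝ := (5/4) * a with ha1def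
  set a2 : ℝ := (3/2) * a with ha2def
  -- regularity
  have hd1 : ∀ x ∈ Set.Ioi x₀, HasDerivAt ψ (deriv ψ x) x := by
    intro x hx
    exact ((hreg.differentiableOn (by norm_num)).differentiableAt
      (isOpen_Ioi.mem_nhds hx)).hasDerivAt
  have hregd : ContDiffOn ℝ 1 (deriv ψ) (Set.Ioi x₀) := by
    exact hreg.deriv_of_isOpen (m := 1) isOpen_Ioi (by norm_num)
  have hd2 : ∀ x ∈ Set.Ioi x₀, HasDerivAt (deriv ψ) (deriv (deriv ψ) x) x := by
    intro x hx
    exact ((hregd.differentiableOn (by norm_num)).differentiableAt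
      (isOpen_Ioi.mem_nhds hx)).hasDerivAt
  have hcψ : ContinuousOn ψ (Set.Ioi x₀) := hreg.continuousOn
  have hcψ' : ContinuousOn (deriv ψ) (Set.Ioi x₀) := hregd.continuousOn
  have hcψ'' : ContinuousOn (deriv (deriv ψ)) (Set.Ioi x₀) :=
    hregd.continuousOn_deriv_of_isOpen isOpen_Ioi (le_refl 1)
  -- the squared function and its derivatives
  set w : ℝ → ℝ := fun t => ψ t ^ 2 with hwdef
  set w1 : ℝ → ℝ := fun t => 2 * ψ t * deriv ψ t with hw1def
  set w2 : ℝ → ℝ := fun t => 2 * (deriv ψ t) ^ 2 + 2 * ψ t * deriv (deriv ψ) t with hw2def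
  have hwd1 : ∀ x ∈ Set.Ioi x₀, HasDerivAt w (w1 x) x := by
    intro x hx
    have this : HasDerivAt (fun t => ψ t * ψ t) _ x := (hd1 x hx).mul (hd1 x hx)
    convert this using 1
    · funext t; rw [hwdef]; ring
    · rw [hw1def]; ring
  have hwd2 : ∀ x ∈ Set.Ioi x₀, HasDerivAt w1 (w2 x) x := by
    intro x hx
    have this : HasDerivAt (fun t => 2 * (ψ t * deriv ψ t)) _ x :=
      ((hd1 x hx).mul (hd2 x hx)).const_mul (2:ℝ)
    convert this using 1
    · funext t; rw [hw1def]; ring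
    · rw [hw2def]; ring
  have hcw : ContinuousOn w (Set.Ioi x₀) := hcψ.pow 2
  have hcw1 : ContinuousOn w1 (Set.Ioi x₀) := (continuousOn_const.mul hcψ).mul hcψ'
  have hcw2 : ContinuousOn w2 (Set.Ioi x₀) :=
    (continuousOn_const.mul (hcψ'.pow 2)).add ((continuousOn_const.mul hcψ).mul hcψ'')
  have hwnn : ∀ t, 0 ≤ w t := fun t => sq_nonneg _
  -- w2 bounds
  have hw2ge : ∀ x, x₀ < x → x ≤ b → q ^ 2 * w x ≤ w2 x := by
    intro x hx hxb
    have h1 := hQ x hx hxb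
    have h2 := hodeQ x hx
    rw [hw2def, hwdef]
    simp only []
    rw [h2]
    nlinarith [sq_nonneg (ψ x), sq_nonneg (deriv ψ x), mul_le_mul_of_nonneg_right h1 (sq_nonneg (ψ x))]
  have hw2nn : ∀ x, x₀ < x → x ≤ b → 0 ≤ w2 x := by
    intro x hx hxb
    have := hw2ge x hx hxb
    nlinarith [sq_nonneg q, hwnn x]
  -- monotonicity of w1 on (x₀, b]
  have hw1mono : ∀ s t : ℝ, x₀ < s → s ≤ t → t ≤ b → w1 s ≤ w1 t := by
    intro s t hs hst htb
    have hsub : Set.Icc s t ⊆ Set.Ioi x₀ := fun u hu => lt_of_lt_of_le hs hu.1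
    exact ftc_mono w1 w2 hst (fun u hu => hwd2 u (hsub hu)) (hcw2.mono hsub)
      (fun u hu => hw2nn u (hsub hu) (le_trans hu.2 htb))
  -- nonnegativity of w1 on (x₀, b]
  have hw1nn : ∀ s, x₀ < s → s ≤ b → 0 ≤ w1 s := by
    intro s hs hsb
    by_contra hneg
    push_neg at hneg
    have hbd : ∀ t ∈ Set.Ioo x₀ s, -(w1 s) * (s - t) ≤ w t := by
      intro t ht
      have hsub : Set.Icc t s ⊆ Set.Ioi x₀ := fun u hu => lt_of_lt_of_le ht.1 hu.1
      have h1 : w s - w t ≤ w1 s * (s - t) :=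
        ftc_ub w w1 (le_of_lt ht.2) (fun u hu => hwd1 u (hsub hu)) (hcw1.mono hsub)
          (fun u hu => hw1mono u s (hsub hu) hu.2 hsb)
      linarith [hwnn s]
    have hlim2 : Filter.Tendsto (fun t => -(w1 s) * (s - t)) (nhdsWithin x₀ (Set.Ioi x₀))
        (nhds (-(w1 s) * (s - x₀))) := by
      apply Filter.Tendsto.mono_left _ nhdsWithin_le_nhds
      exact (Continuous.tendsto ((continuous_const.mul (continuous_const.sub continuous_id))) x₀)
    have hwlim : Filter.Tendsto w (nhdsWithin x₀ (Set.Ioi x₀)) (nhds 0) := by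
      have := hlim.pow 2
      simpa [hwdef] using this
    have hle : -(w1 s) * (s - x₀) ≤ 0 := by
      apply le_of_tendsto_of_tendsto hlim2 hwlim
      filter_upwards [Ioo_mem_nhdsGT_of_mem ⟨le_refl x₀, hs⟩] with t ht
      exact hbd t ht
    nlinarith [hle]
  -- monotonicity of w on (x₀, b]
  have hwmono : ∀ s t : ℝ, x₀ < s → s ≤ t → t ≤ b → w s ≤ w t := by
    intro s t hs hst htb
    have hsub : Set.Icc s t ⊆ Set.Ioi x₀ := fun u hu => lt_of_lt_of_le hs hu.1
    exact ftc_mono w w1 hst (fun u hu => hwd1 u (hsub hu)) (hcw1.mono hsub)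
      (fun u hu => hw1nn u (hsub hu) (le_trans hu.2 htb))
  clear_value b a1 a2 w w1 w2
  -- Apply the growth lemma
  have hab : a ≤ b := by nlinarith
  have ha2b : a2 ≤ b := by rw [ha2def, hbdef]; nlinarith
  have ha1b : a1 ≤ b := by rw [ha1def, hbdef]; nlinarith
  have haa1 : a ≤ a1 := by rw [ha1def]; nlinarith
  have haa2 : a ≤ a2 := by rw [ha2def]; nlinarith
  have ha1a2 : a1 ≤ a2 := by rw [ha1def, ha2def]; nlinarith
  have hx₀a1 : x₀ < a1 := lt_of_lt_of_le hx₀a haa1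
  have hx₀a2 : x₀ < a2 := lt_of_lt_of_le hx₀a haa2
  have hgrow : ∀ s : ℝ, x₀ < s → s ≤ a2 →
      w s ≤ 2 * Real.exp (-(q * (a2 - s))) * w a2 := by
    intro s hs hsa2
    have hsub : Set.Icc s a2 ⊆ Set.Ioi x₀ := fun u hu => lt_of_lt_of_le hs hu.1
    apply expGrow hq hsa2 (fun t ht => hwd1 t (hsub ht)) (fun t ht => hwd2 t (hsub ht))
      (hcw.mono hsub) (hcw1.mono hsub) (hcw2.mono hsub) (fun t _ => hwnn t)
      (fun t ht => hw2ge t (hsub ht) (le_trans ht.2 ha2b))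
      (hw1nn s hs (le_trans hsa2 ha2b))
  have hqa : q * (a2 - a) = q * a / 2 := by rw [ha2def]; ring
  have hqa1 : q * (a2 - a1) = q * a / 4 := by rw [ha2def, ha1def]; ring
  have hWa : w a ≤ 2 * Real.exp (-(q * a / 2)) * w a2 := by
    have := hgrow a hx₀a haa2; rwa [hqa] at this
  have hWa1 : w a1 ≤ 2 * Real.exp (-(q * a / 4)) * w a2 := by
    have := hgrow a1 hx₀a1 ha1a2; rwa [hqa1] at this
  -- slope bound for w1 a
  have hw1a : w1 a ≤ 4 * w a1 / a := by
    have hsub : Set.Icc a a1 ⊆ Set.Ioi x₀ := fun u hu => lt_of_lt_of_le hx₀a hu.1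
    have h1 : w1 a * (a1 - a) ≤ w a1 - w a :=
      ftc_lb w w1 haa1 (fun t ht => hwd1 t (hsub ht)) (hcw1.mono hsub)
        (fun u hu => hw1mono a u hx₀a hu.1 (le_trans hu.2 ha1b))
    have h2 : a1 - a = a / 4 := by rw [ha1def]; ring
    rw [h2] at h1
    rw [le_div_iff₀ hapos]
    nlinarith [hwnn a, h1]
  -- numeric inequality
  have hWnn : 0 ≤ w a2 := hwnn a2
  have hqa0 : (0:ℝ) < q * a := mul_pos hq hapos
  have he16nn : 0 ≤ Real.exp (-(q * a / 4)) := Real.exp_nonneg _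
  have he32nn : 0 ≤ Real.exp (-(q * a / 8)) := Real.exp_nonneg _
  have hsplit : Real.exp (-(q * a / 4))
      = Real.exp (-(q * a / 8)) * Real.exp (-(q * a / 8)) := by
    rw [← Real.exp_add]; ring_nf
  have he8 : Real.exp (-(q * a / 2)) ≤ Real.exp (-(q * a / 4)) :=
    Real.exp_le_exp.mpr (by linarith)
  have hWa' : w a ≤ 2 * Real.exp (-(q * a / 4)) * w a2 := by
    refine le_trans hWa ?_
    apply mul_le_mul_of_nonneg_right _ hWnn
    nlinarith [he8]
  have hnum : w a * a + w1 a / 2 ≤ Real.exp (-(q * a / 8)) * (w a2 * (a / 2)) := by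
    have t2 : 4 * w a1 / a ≤ 8 * Real.exp (-(q * a / 4)) * w a2 / a := by
      have h4 : 4 * w a1 ≤ 8 * Real.exp (-(q * a / 4)) * w a2 := by nlinarith [hWa1]
      exact (div_le_div_iff_of_pos_right hapos).mpr h4
    calc w a * a + w1 a / 2
        ≤ (2 * Real.exp (-(q * a / 4)) * w a2) * a
            + (8 * Real.exp (-(q * a / 4)) * w a2 / a) / 2 := by
          refine add_le_add (mul_le_mul_of_nonneg_right hWa' (le_of_lt hapos)) ?_
          have := le_trans hw1a t2
          linarith
      _ = 2 * a * Real.exp (-(q * a / 4)) * w a2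
            + (4 * Real.exp (-(q * a / 4)) * w a2) / a := by ring
      _ ≤ 2 * a * Real.exp (-(q * a / 4)) * w a2
            + 4 * Real.exp (-(q * a / 4)) * w a2 := by
          refine add_le_add_right (div_le_self ?_ ha1) _
          positivity
      _ ≤ 6 * a * Real.exp (-(q * a / 4)) * w a2 := by
          nlinarith [mul_nonneg (mul_nonneg (sub_nonneg.mpr ha1) he16nn) hWnn]
      _ = 6 * a * (Real.exp (-(q * a / 8)) * Real.exp (-(q * a / 8))) * w a2 := by
          rw [← hsplit]
      _ ≤ Real.exp (-(q * a / 8)) * (w a2 * (a / 2)) := by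
          nlinarith [mul_le_mul_of_nonneg_left h12
            (show (0:ℝ) ≤ 6 * a * Real.exp (-(q * a / 8)) * w a2 by positivity)]
  -- lintegral bound on ψ² over the forbidden region
  have hT1 : (∫⁻ x in Set.Ioo x₀ a, ENNReal.ofReal (ψ x ^ 2))
      ≤ ENNReal.ofReal (w a * a) := by
    have step : (∫⁻ x in Set.Ioo x₀ a, ENNReal.ofReal (ψ x ^ 2))
        ≤ ∫⁻ _x in Set.Ioo x₀ a, ENNReal.ofReal (w a) := by
      refine lintegral_mono_ae (ae_restrict_of_forall_mem measurableSet_Ioo ?_)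
      intro x hx
      apply ENNReal.ofReal_le_ofReal
      have hx2 : ψ x ^ 2 = w x := by rw [hwdef]
      rw [hx2]
      exact hwmono x a hx.1 hx.2.le hab
    refine le_trans step ?_
    rw [setLIntegral_const, Real.volume_Ioo]
    calc ENNReal.ofReal (w a) * ENNReal.ofReal (a - x₀)
        ≤ ENNReal.ofReal (w a) * ENNReal.ofReal a :=
          mul_le_mul_right (ENNReal.ofReal_le_ofReal (by linarith)) _
      _ = ENNReal.ofReal (w a * a) := (ENNReal.ofReal_mul (hwnn a)).symm
  -- lintegral bound on ψ'² over the forbidden region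
  have hgm : Measurable (fun x => ENNReal.ofReal (deriv ψ x ^ 2)) :=
    ((measurable_deriv ψ).pow_const 2).ennreal_ofReal
  have hkey : ∀ s : ℝ, x₀ < s → s ≤ a →
      (∫⁻ x in Set.Ioo s a, ENNReal.ofReal (deriv ψ x ^ 2))
        ≤ ENNReal.ofReal (w1 a / 2) := by
    intro s hs hsa
    have hsub : Set.Icc s a ⊆ Set.Ioi x₀ := fun u hu => lt_of_lt_of_le hs hu.1
    have huIcc : Set.uIcc s a = Set.Icc s a := Set.uIcc_of_le hsa
    have hcont1 : ContinuousOn (fun t => deriv ψ t ^ 2) (Set.Icc s a) :=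
      (hcψ'.mono hsub).pow 2
    have hcont2 : ContinuousOn (fun t => ψ t * deriv (deriv ψ) t) (Set.Icc s a) :=
      (hcψ.mono hsub).mul (hcψ''.mono hsub)
    have hint1 : IntervalIntegrable (fun t => deriv ψ t ^ 2) volume s a :=
      (huIcc ▸ hcont1).intervalIntegrable
    have hint2 : IntervalIntegrable (fun t => ψ t * deriv (deriv ψ) t) volume s a :=
      (huIcc ▸ hcont2).intervalIntegrable
    have hder : ∀ t ∈ Set.uIcc s a, HasDerivAt (fun t => ψ t * deriv ψ t)
        (deriv ψ t ^ 2 + ψ t * deriv (deriv ψ) t) t := by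
      intro t ht
      rw [huIcc] at ht
      have this : HasDerivAt (fun t => ψ t * deriv ψ t) _ t := (hd1 t (hsub ht)).mul (hd2 t (hsub ht))
      convert this using 1
      ring
    have hftc := intervalIntegral.integral_eq_sub_of_hasDerivAt hder
      ((huIcc ▸ (hcont1.add hcont2)).intervalIntegrable)
    have hsplit2 : (∫ t in s..a, (deriv ψ t ^ 2 + ψ t * deriv (deriv ψ) t))
        = (∫ t in s..a, deriv ψ t ^ 2) + ∫ t in s..a, ψ t * deriv (deriv ψ) t :=
      intervalIntegral.integral_add hint1 hint2
    have hnn2 : 0 ≤ ∫ t in s..a, ψ t * deriv (deriv ψ) t := by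
      apply intervalIntegral.integral_nonneg hsa
      intro u hu
      rw [hodeQ u (hsub hu)]
      have hQu := hQ u (hsub hu) (le_trans hu.2 hab)
      nlinarith [mul_le_mul_of_nonneg_right hQu (sq_nonneg (ψ u)), sq_nonneg q,
        sq_nonneg (ψ u)]
    have hw1s : 0 ≤ ψ s * deriv ψ s := by
      have := hw1nn s hs (le_trans hsa hab)
      rw [hw1def] at this
      simp only [] at this
      linarith
    have hwa2 : ψ a * deriv ψ a = w1 a / 2 := by rw [hw1def]; ring
    have hreal : (∫ t in s..a, deriv ψ t ^ 2) ≤ w1 a / 2 := by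
      have h := hftc
      rw [hsplit2] at h
      linarith [h, hnn2, hw1s, hwa2]
    have hIntOn : IntegrableOn (fun t => deriv ψ t ^ 2) (Set.Ioo s a) volume :=
      (hcont1.integrableOn_Icc).mono_set Set.Ioo_subset_Icc_self
    have heq : (∫⁻ x in Set.Ioo s a, ENNReal.ofReal (deriv ψ x ^ 2))
        = ENNReal.ofReal (∫ x in Set.Ioo s a, deriv ψ x ^ 2) :=
      (ofReal_integral_eq_lintegral_ofReal hIntOn
        (ae_of_all _ (fun t => sq_nonneg _))).symm
    rw [heq]
    apply ENNReal.ofReal_le_ofReal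
    have hIoo : (∫ x in Set.Ioo s a, deriv ψ x ^ 2) = ∫ x in s..a, deriv ψ x ^ 2 := by
      rw [intervalIntegral.integral_of_le hsa, integral_Ioc_eq_integral_Ioo]
    rw [hIoo]
    exact hreal
  have hT2 : (∫⁻ x in Set.Ioo x₀ a, ENNReal.ofReal (deriv ψ x ^ 2))
      ≤ ENNReal.ofReal (w1 a / 2) := by
    have hseq : ∀ n : ℕ, x₀ < x₀ + (a - x₀)/(n+1) ∧ x₀ + (a - x₀)/(n+1) ≤ a := by
      intro n
      have hd : (0:ℝ) < (a - x₀)/((n:ℝ)+1) := by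
        apply div_pos (by linarith)
        positivity
      have h1 : (a - x₀)/((n:ℝ)+1) ≤ a - x₀ := by
        apply div_le_self (by linarith)
        have : (0:ℝ) ≤ (n:ℝ) := Nat.cast_nonneg n
        linarith
      exact ⟨by linarith, by linarith⟩
    have hsetmono : Monotone (fun n : ℕ => Set.Ioo (x₀ + (a - x₀)/((n:ℝ)+1)) a) := by
      intro i j hij
      apply Set.Ioo_subset_Ioo_left
      have hij' : ((i:ℝ)+1) ≤ ((j:ℝ)+1) := by
        have : (i:ℝ) ≤ (j:ℝ) := Nat.cast_le.mpr hij
        linarith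
      have : (a - x₀)/((j:ℝ)+1) ≤ (a - x₀)/((i:ℝ)+1) := by
        apply div_le_div_of_nonneg_left (by linarith) (by positivity) hij'
      linarith
    have hcover : ∀ x ∈ Set.Ioo x₀ a, ∃ n : ℕ, x ∈ Set.Ioo (x₀ + (a - x₀)/((n:ℝ)+1)) a := by
      rintro x ⟨hx1, hx2⟩
      obtain ⟨n, hn⟩ := exists_nat_gt ((a - x₀)/(x - x₀))
      refine ⟨n, ?_, hx2⟩
      have hxpos : (0:ℝ) < x - x₀ := by linarith
      rw [div_lt_iff₀ hxpos] at hn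
      have h2 : (a - x₀)/((n:ℝ)+1) < x - x₀ := by
        rw [div_lt_iff₀ (by positivity)]
        nlinarith [hn, hxpos]
      linarith
    have hind : (Set.Ioo x₀ a).indicator (fun x => ENNReal.ofReal (deriv ψ x ^ 2))
        = fun x => ⨆ n : ℕ, (Set.Ioo (x₀ + (a - x₀)/((n:ℝ)+1)) a).indicator
            (fun x => ENNReal.ofReal (deriv ψ x ^ 2)) x := by
      funext x
      by_cases hx : x ∈ Set.Ioo x₀ a
      · rw [Set.indicator_of_mem hx]
        apply le_antisymm
        · obtain ⟨n, hn⟩ := hcover x hx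
          exact le_iSup_of_le n (le_of_eq (Set.indicator_of_mem hn (fun x => ENNReal.ofReal (deriv ψ x ^ 2))).symm)
        · apply iSup_le
          intro n
          apply Set.indicator_le_self'
          intro _ _
          exact zero_le
      · rw [Set.indicator_of_notMem hx]
        have hz : ∀ n : ℕ, (Set.Ioo (x₀ + (a - x₀)/((n:ℝ)+1)) a).indicator
            (fun x => ENNReal.ofReal (deriv ψ x ^ 2)) x = 0 := by
          intro n
          apply Set.indicator_of_notMem
          intro h
          exact hx ⟨by linarith [(hseq n).1, h.1], h.2⟩
        simp [hz]
    calc (∫⁻ x in Set.Ioo x₀ a, ENNReal.ofReal (deriv ψ x ^ 2))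
        = ∫⁻ x, (Set.Ioo x₀ a).indicator (fun x => ENNReal.ofReal (deriv ψ x ^ 2)) x :=
          (lintegral_indicator measurableSet_Ioo _).symm
      _ = ∫⁻ x, ⨆ n : ℕ, (Set.Ioo (x₀ + (a - x₀)/((n:ℝ)+1)) a).indicator
            (fun x => ENNReal.ofReal (deriv ψ x ^ 2)) x := by rw [hind]
      _ = ⨆ n : ℕ, ∫⁻ x, (Set.Ioo (x₀ + (a - x₀)/((n:ℝ)+1)) a).indicator
            (fun x => ENNReal.ofReal (deriv ψ x ^ 2)) x := by
          apply lintegral_iSup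
          · intro n
            exact hgm.indicator measurableSet_Ioo
          · intro i j hij x
            exact Set.indicator_le_indicator_of_subset (hsetmono hij)
              (fun y => zero_le) x
      _ ≤ ENNReal.ofReal (w1 a / 2) := by
          apply iSup_le
          intro n
          rw [lintegral_indicator measurableSet_Ioo]
          exact hkey _ (hseq n).1 (hseq n).2
  -- lower bound for the full integral
  have hR : ENNReal.ofReal (w a2 * (a/2))
      ≤ ∫⁻ x in Set.Ioi x₀, ENNReal.ofReal (ψ x ^ 2) := by
    have hsub : Set.Ioo a2 b ⊆ Set.Ioi x₀ := fun u hu => lt_trans hx₀a2 hu.1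
    have step1 : (∫⁻ _x in Set.Ioo a2 b, ENNReal.ofReal (w a2))
        ≤ ∫⁻ x in Set.Ioo a2 b, ENNReal.ofReal (ψ x ^ 2) := by
      refine lintegral_mono_ae (ae_restrict_of_forall_mem measurableSet_Ioo ?_)
      intro x hx
      apply ENNReal.ofReal_le_ofReal
      have hx2 : ψ x ^ 2 = w x := by rw [hwdef]
      rw [hx2]
      exact hwmono a2 x hx₀a2 hx.1.le hx.2.le
    have step2 : (∫⁻ x in Set.Ioo a2 b, ENNReal.ofReal (ψ x ^ 2))
        ≤ ∫⁻ x in Set.Ioi x₀, ENNReal.ofReal (ψ x ^ 2) :=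
      lintegral_mono' (Measure.restrict_mono hsub le_rfl) le_rfl
    calc ENNReal.ofReal (w a2 * (a/2))
        = ENNReal.ofReal (w a2) * ENNReal.ofReal (a/2) := ENNReal.ofReal_mul hWnn
      _ = ENNReal.ofReal (w a2) * volume (Set.Ioo a2 b) := by
          rw [Real.volume_Ioo, show b - a2 = a/2 by rw [hbdef, ha2def]; ring]
      _ = ∫⁻ _x in Set.Ioo a2 b, ENNReal.ofReal (w a2) := (setLIntegral_const _ _).symm
      _ ≤ _ := le_trans step1 step2
  constructor
  · calc (∫⁻ x in Set.Ioo x₀ a, ENNReal.ofReal (ψ x ^ 2 + deriv ψ x ^ 2))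
        ≤ ∫⁻ x in Set.Ioo x₀ a,
            (ENNReal.ofReal (ψ x ^ 2) + ENNReal.ofReal (deriv ψ x ^ 2)) :=
          lintegral_mono (fun x => ENNReal.ofReal_add_le)
      _ = (∫⁻ x in Set.Ioo x₀ a, ENNReal.ofReal (ψ x ^ 2))
            + ∫⁻ x in Set.Ioo x₀ a, ENNReal.ofReal (deriv ψ x ^ 2) :=
          lintegral_add_right' _ hgm.aemeasurable
      _ ≤ ENNReal.ofReal (w a * a) + ENNReal.ofReal (w1 a / 2) := add_le_add hT1 hT2
      _ = ENNReal.ofReal (w a * a + w1 a / 2) := by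
          rw [← ENNReal.ofReal_add (mul_nonneg (hwnn a) (le_of_lt hapos))
            (by linarith [hw1nn a hx₀a hab])]
      _ ≤ ENNReal.ofReal (Real.exp (-(q * a / 8)) * (ψ a2 ^ 2 * (a / 2))) := by
          apply ENNReal.ofReal_le_ofReal
          have hwa2' : ψ a2 ^ 2 = w a2 := by rw [hwdef]
          rw [hwa2']
          exact hnum
  · have hwa2' : ψ a2 ^ 2 = w a2 := by rw [hwdef]
    rw [hwa2']
    exact hR


set_option maxHeartbeats 1000000 in
/-- Eigenfunctions with nonpositive eigenvalue are exponentially small (in `L`) in the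
classically forbidden region `{x ≲ L²}`. -/
theorem statement9 (M m E C : ℝ) (hM : 0 < M) (hm : 0 < m) (hC : 0 < C) :
    ∃ c₁ c₂ : ℝ, 0 < c₁ ∧ 0 < c₂ ∧
    ∀ x₀ : ℝ, 2 ≤ x₀ → ∃ L₀ : ℕ, ∀ L : ℕ, L₀ ≤ L →
    ∀ E1 E2 : ℝ → ℝ,
      (∀ x : ℝ, x₀ < x → |E1 x| ≤ C * Real.log x / x ^ 2) →
      (∀ x : ℝ, x₀ < x → |E2 x| ≤ min (1 / 10) (C * Real.log x / x)) →
    ∀ lam : ℝ, lam ≤ 0 →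
    ∀ ψ : ℝ → ℝ, IsEigenfunction (Vtil M m E L E1 E2) x₀ lam ψ →
    (∫⁻ x in Set.Ioo x₀ (c₁ * (L : ℝ) ^ 2),
        ENNReal.ofReal (ψ x ^ 2 + deriv ψ x ^ 2)) ^ ((1 : ℝ) / 2)
      ≤ ENNReal.ofReal (Real.exp (-(c₂ * (L : ℝ)))) *
        (∫⁻ x in Set.Ioi x₀, ENNReal.ofReal (ψ x ^ 2)) ^ ((1 : ℝ) / 2) := by
  have hK : (0:ℝ) < 2 * M * m ^ 2 + C := by positivity
  set K : ℝ := 2 * M * m ^ 2 + C with hKdef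
  refine ⟨(4 * K)⁻¹, 1 / 64, by positivity, by norm_num, ?_⟩
  intro x₀ hx₀
  set c₁ : ℝ := (4 * K)⁻¹ with hc₁def
  have hc₁ : 0 < c₁ := by positivity
  refine ⟨352 + ⌈(x₀ + 2) / c₁⌉₊, ?_⟩
  intro L hL E1 E2 hE1 hE2 lam hlam ψ hψ
  obtain ⟨hexist, hreg, hL2a, hL2b, hL2c, hlim, hode⟩ := hψ
  have hL352 : (352:ℝ) ≤ (L:ℝ) := by
    have : (352:ℕ) ≤ L := le_trans (Nat.le_add_right _ _) hL
    exact_mod_cast this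
  have hLpos : (0:ℝ) < (L:ℝ) := by linarith
  set a : ℝ := c₁ * (L:ℝ) ^ 2 with hadef
  have hxa : x₀ + 2 ≤ a := by
    have h1 : ((⌈(x₀ + 2) / c₁⌉₊ : ℝ)) ≤ (L:ℝ) := by
      have : ⌈(x₀ + 2) / c₁⌉₊ ≤ L := le_trans (Nat.le_add_left _ _) hL
      exact_mod_cast this
    have h2 : (x₀ + 2) / c₁ ≤ (L:ℝ) := le_trans (Nat.le_ceil _) h1
    have h3 : x₀ + 2 ≤ c₁ * (L:ℝ) := by
      rw [div_le_iff₀ hc₁] at h2; linarith [h2]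
    have h4 : c₁ * (L:ℝ) ≤ c₁ * (L:ℝ)^2 := by nlinarith
    linarith
  have hx₀a : x₀ < a := by linarith
  have ha1 : (1:ℝ) ≤ a := by linarith
  have hapos : (0:ℝ) < a := by linarith
  set q : ℝ := K / (L:ℝ) with hqdef
  have hq : 0 < q := by positivity
  have hqa8 : q * a / 8 = (L:ℝ) / 32 := by
    rw [hqdef, hadef, hc₁def]; field_simp; ring
  have hb : 2 * a = (L:ℝ)^2 / (2 * K) := by
    rw [hadef, hc₁def]; field_simp; ring
  -- ODE in normal form
  have hodeQ : ∀ x, x₀ < x → deriv (deriv ψ) x = (Vtil M m E L E1 E2 x - lam) * ψ x := by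
    intro x hx
    have h := hode x hx
    linear_combination -h
  -- potential lower bound
  have hQ : ∀ x, x₀ < x → x ≤ 2 * a → q ^ 2 ≤ Vtil M m E L E1 E2 x - lam := by
    intro x hx hxb
    have hx0 : (0:ℝ) < x := by linarith
    have hlogx : Real.log x ≤ x := by
      have := Real.log_le_sub_one_of_pos hx0
      linarith
    have hlognn : 0 ≤ Real.log x := Real.log_nonneg (by linarith)
    have hE1x := hE1 x hx
    have hE2x := hE2 x hx
    have hE1lb : -(C / x) ≤ E1 x := by
      have h1 : C * Real.log x / x ^ 2 ≤ C / x := by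
        rw [div_le_div_iff₀ (by positivity) hx0]
        nlinarith [mul_le_mul_of_nonneg_left hlogx (le_of_lt hC)]
      linarith [neg_abs_le (E1 x)]
    have hE2lb : -(1/10 : ℝ) ≤ E2 x := by
      have h2 : |E2 x| ≤ 1/10 := le_trans hE2x (min_le_left _ _)
      linarith [neg_abs_le (E2 x)]
    have hLL : (L:ℝ)^2 ≤ (L:ℝ) * ((L:ℝ) + 1) + E^2 * m^2 := by
      nlinarith [sq_nonneg (E * m), hLpos]
    have hbignn : (0:ℝ) ≤ ((L:ℝ) * ((L:ℝ) + 1) + E^2 * m^2) / x^2 := by positivity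
    have hcent : (9/10) * ((L:ℝ)^2 / x^2)
        ≤ (((L:ℝ) * ((L:ℝ) + 1) + E^2 * m^2) / x^2) * (1 + E2 x) := by
      have hA : (L:ℝ)^2 / x^2 ≤ ((L:ℝ) * ((L:ℝ) + 1) + E^2 * m^2) / x^2 := by
        gcongr
      have hB : (9/10 : ℝ) ≤ 1 + E2 x := by linarith
      calc (9/10) * ((L:ℝ)^2 / x^2) = ((L:ℝ)^2 / x^2) * (9/10) := by ring
        _ ≤ (((L:ℝ) * ((L:ℝ) + 1) + E^2 * m^2) / x^2) * (1 + E2 x) :=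
            mul_le_mul hA hB (by norm_num) hbignn
    have hKx : K * x ≤ (L:ℝ)^2 / 2 := by
      have := mul_le_mul_of_nonneg_left hxb (le_of_lt hK)
      rw [hb] at this
      calc K * x ≤ K * ((L:ℝ)^2 / (2*K)) := this
        _ = (L:ℝ)^2 / 2 := by field_simp
    have hP : K^2 * x^2 + K * x * (L:ℝ)^2 ≤ (9/10) * ((L:ℝ)^2 * (L:ℝ)^2) := by
      nlinarith [mul_le_mul hKx hKx (by positivity) (by positivity : (0:ℝ) ≤ (L:ℝ)^2/2),
        mul_le_mul_of_nonneg_right hKx (sq_nonneg (L:ℝ))]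
    have hiden : (-(2*M*m^2)/x - C/x + (9/10) * ((L:ℝ)^2 / x^2)) - (K/(L:ℝ))^2
        = ((9/10) * ((L:ℝ)^2 * (L:ℝ)^2) - K * x * (L:ℝ)^2 - K^2 * x^2) / (x^2 * (L:ℝ)^2) := by
      rw [hKdef]
      field_simp
      ring
    have hkey : (K/(L:ℝ))^2 ≤ -(2*M*m^2)/x - C/x + (9/10) * ((L:ℝ)^2 / x^2) := by
      have hnn : (0:ℝ) ≤ ((9/10) * ((L:ℝ)^2 * (L:ℝ)^2) - K * x * (L:ℝ)^2 - K^2 * x^2)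
          / (x^2 * (L:ℝ)^2) := by
        apply div_nonneg
        · linarith
        · positivity
      linarith [hiden ▸ hnn]
    have hq2 : q^2 = (K/(L:ℝ))^2 := by rw [hqdef]
    rw [hq2]
    have hVt : Vtil M m E L E1 E2 x
        = -(2*M*m^2)/x + (((L:ℝ) * ((L:ℝ) + 1) + E^2 * m^2) / x^2) * (1 + E2 x) + E1 x := rfl
    rw [hVt]
    linarith [hcent, hE1lb, hlam]
  have h12 : Real.exp (-(q * a / 8)) ≤ 1 / 12 := by
    rw [hqa8]
    have h1 : (12:ℝ) ≤ Real.exp ((L:ℝ) / 32) := by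
      nlinarith [Real.add_one_le_exp ((L:ℝ) / 32)]
    rw [Real.exp_neg]
    calc (Real.exp ((L:ℝ)/32))⁻¹ ≤ (12:ℝ)⁻¹ := inv_anti₀ (by norm_num) h1
      _ = 1/12 := by norm_num
  obtain ⟨hTsum, hR⟩ := core hx₀ hx₀a ha1 hq hreg hlim hodeQ hQ h12
  rw [hqa8] at hTsum
  -- endgame
  have hD : (0:ℝ) ≤ ψ ((3/2) * a) ^ 2 * (a/2) := by positivity
  have hsq : Real.exp (-((L:ℝ)/32)) ^ ((1:ℝ)/2) = Real.exp (-(1/64 * (L:ℝ))) := by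
    rw [← Real.exp_mul]
    congr 1
    ring
  calc (∫⁻ x in Set.Ioo x₀ a, ENNReal.ofReal (ψ x ^ 2 + deriv ψ x ^ 2)) ^ ((1:ℝ)/2)
      ≤ (ENNReal.ofReal (Real.exp (-((L:ℝ)/32)) * (ψ ((3/2) * a) ^ 2 * (a/2)))) ^ ((1:ℝ)/2) :=
        ENNReal.rpow_le_rpow hTsum (by norm_num)
    _ = ENNReal.ofReal ((Real.exp (-((L:ℝ)/32)) * (ψ ((3/2) * a) ^ 2 * (a/2))) ^ ((1:ℝ)/2)) :=
        ENNReal.ofReal_rpow_of_nonneg (mul_nonneg (Real.exp_nonneg _) hD) (by norm_num)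
    _ = ENNReal.ofReal (Real.exp (-((L:ℝ)/32)) ^ ((1:ℝ)/2)
          * (ψ ((3/2) * a) ^ 2 * (a/2)) ^ ((1:ℝ)/2)) := by
        rw [Real.mul_rpow (Real.exp_nonneg _) hD]
    _ = ENNReal.ofReal (Real.exp (-(1/64 * (L:ℝ))))
          * ENNReal.ofReal ((ψ ((3/2) * a) ^ 2 * (a/2)) ^ ((1:ℝ)/2)) := by
        rw [hsq, ENNReal.ofReal_mul (Real.exp_nonneg _)]
    _ ≤ ENNReal.ofReal (Real.exp (-(1/64 * (L:ℝ))))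
          * (∫⁻ x in Set.Ioi x₀, ENNReal.ofReal (ψ x ^ 2)) ^ ((1:ℝ)/2) := by
        apply mul_le_mul_right
        calc ENNReal.ofReal ((ψ ((3/2) * a) ^ 2 * (a/2)) ^ ((1:ℝ)/2))
            = (ENNReal.ofReal (ψ ((3/2) * a) ^ 2 * (a/2))) ^ ((1:ℝ)/2) :=
              (ENNReal.ofReal_rpow_of_nonneg hD (by norm_num)).symm
          _ ≤ _ := ENNReal.rpow_le_rpow hR (by norm_num)
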